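/- Let m ≥ 3 and k ≥ 1 be integers and μ ∈ ℝ with μ ≠ -k/(m-1). With α as above and q = 2(μ-1)α + 1, one has q > (m+2)/(m-2) if and only if μ < -k/(m-2), and q = (m+2)/(m-2) if and only if μ = -k/(m-2). -/
import Mathlib


theorem stmt12 (m k : ℕ) (hm : 3 ≤ m) (hk : 1 ≤ k) (μ : ℝ)
    (hμ : μ ≠ -(k : ℝ) / ((m : ℝ) - 1)) :
    let η : ℝ := ((m : ℝ) - 1) * ((m : ℝ) - 2) * μ ^ 2 +
      2 * ((m : ℝ) - 2) * (k : ℝ) * μ + ((k : ℝ) + 1) * (k : ℝ)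
    let α : ℝ := 2 * ((k : ℝ) + ((m : ℝ) - 1) * μ) / η
    let q : ℝ := 2 * (μ - 1) * α + 1
    (q > ((m : ℝ) + 2) / ((m : ℝ) - 2) ↔ μ < -(k : ℝ) / ((m : ℝ) - 2)) ∧
      (q = ((m : ℝ) + 2) / ((m : ℝ) - 2) ↔ μ = -(k : ℝ) / ((m : ℝ) - 2)) := by
  intro η α q
  have hm' : (3 : ℝ) ≤ (m : ℝ) := by exact_mod_cast hm
  have hk' : (1 : ℝ) ≤ (k : ℝ) := by exact_mod_cast hk
  set M : ℝ := (m : ℝ)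
  set K : ℝ := (k : ℝ)
  have hM2 : (0 : ℝ) < M - 2 := by linarith
  have hη : 0 < η := by
    have h1 : 0 < (M - 1) * η := by
      have : (M - 1) * η = (M - 2) * ((M - 1) * μ + K) ^ 2 + K * (K + M - 1) := by
        simp only [η]; ring
      rw [this]
      have := sq_nonneg ((M - 1) * μ + K)
      nlinarith
    nlinarith
  have hden : 0 < (M - 2) * η := mul_pos hM2 hη
  have key : q - (M + 2) / (M - 2) =
      (-4 * (K + M - 1) * ((M - 2) * μ + K)) / ((M - 2) * η) := by
    simp only [q, α]
    field_simp
    ring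
  have hKM : 0 < 4 * (K + M - 1) := by linarith
  constructor
  · constructor
    · intro h
      have h0 : 0 < q - (M + 2) / (M - 2) := by linarith
      rw [key] at h0
      have hnum : 0 < -4 * (K + M - 1) * ((M - 2) * μ + K) :=
        (div_pos_iff_of_pos_right hden).mp h0
      have : (M - 2) * μ + K < 0 := by nlinarith
      rw [lt_div_iff₀ hM2]
      nlinarith
    · intro h
      rw [lt_div_iff₀ hM2] at h
      have hnum : 0 < -4 * (K + M - 1) * ((M - 2) * μ + K) := by nlinarith
      have h0 : 0 < q - (M + 2) / (M - 2) := by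
        rw [key]; exact div_pos hnum hden
      linarith
  · constructor
    · intro h
      have h0 : q - (M + 2) / (M - 2) = 0 := by rw [h]; ring
      rw [key, div_eq_zero_iff] at h0
      rcases h0 with h0 | h0
      · have : (M - 2) * μ + K = 0 := by
          rcases mul_eq_zero.mp h0 with h1 | h1
          · nlinarith
          · exact h1
        rw [eq_div_iff (ne_of_gt hM2)]
        nlinarith
      · exact absurd h0 (ne_of_gt hden)
    · intro h
      rw [eq_div_iff (ne_of_gt hM2)] at h
      have hnum : -4 * (K + M - 1) * ((M - 2) * μ + K) = 0 := by nlinarith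
      have h0 : q - (M + 2) / (M - 2) = 0 := by
        rw [key, hnum, zero_div]
      linarith
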